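/- Let G=(V,E) be a connected simple graph with at least two vertices and maximum vertex degree Δ. Then every well-connected set M of G (in particular a largest well-connected set) satisfies |M| ≤ max( ((Δ−1)/Δ)·|V| , Δ+1 ). -/
import Mathlib


/-- A set `M` of vertices of `G` is *well-connected* if (i) any two distinct
vertices of `M` are joined by a path in `G` avoiding all other vertices of `M`,
and (ii) the subgraph induced by the complement of `M` is connected
(the empty induced subgraph being regarded as connected). -/
def IsWCS {V : Type*} (G : SimpleGraph V) (M : Set V) : Prop :=
  (∀ u ∈ M, ∀ v ∈ M, u ≠ v →
    ∃ p : G.Walk u v, ∀ w ∈ p.support, w ∈ M → w = u ∨ w = v) ∧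
  (G.induce Mᶜ).Preconnected

private lemma first_step {V : Type*} {G : SimpleGraph V} {u v : V}
    (p : G.Walk u v) (h : u ≠ v) : ∃ w, G.Adj u w ∧ w ∈ p.support := by
  cases p with
  | nil => exact absurd rfl h
  | cons h' q => exact ⟨_, h', by simp⟩

/-- In a connected graph with at least two vertices and maximum degree `Δ`,
every well-connected set `M` satisfies `|M| ≤ max (((Δ-1)/Δ)·|V|) (Δ+1)`. -/
theorem wcs_upper_bound {V : Type*} [Fintype V] (G : SimpleGraph V)
    [DecidableRel G.Adj] (hG : G.Connected) (hV : 2 ≤ Fintype.card V)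
    (M : Set V) (hM : IsWCS G M) :
    (Nat.card M : ℝ) ≤
      max (((G.maxDegree : ℝ) - 1) / (G.maxDegree : ℝ) * (Fintype.card V : ℝ))
        ((G.maxDegree : ℝ) + 1) := by
  classical
  set Δ := G.maxDegree with hΔdef
  -- Δ ≥ 1
  have hΔ1 : 1 ≤ Δ := by
    obtain ⟨u, v, huv⟩ := Fintype.exists_pair_of_one_lt_card (α := V) (by omega)
    obtain ⟨p⟩ := hG.preconnected u v
    obtain ⟨w, hw, -⟩ := first_step p huv
    have : 0 < G.degree u := by
      rw [G.degree_pos_iff_exists_adj]; exact ⟨w, hw⟩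
    exact le_trans this (G.degree_le_maxDegree u)
  have hcard : Nat.card M = M.toFinset.card := by
    rw [Nat.card_eq_fintype_card, Set.toFinset_card]
  by_cases hsmall : Nat.card M ≤ Δ + 1
  · refine le_trans ?_ (le_max_right _ _)
    exact_mod_cast hsmall
  -- now |M| ≥ Δ + 2
  have hbig : Δ + 2 ≤ M.toFinset.card := by omega
  -- every u ∈ M has a neighbor outside M
  have lemA : ∀ u ∈ M, ∃ x, x ∉ M ∧ G.Adj u x := by
    intro u hu
    -- find v ∈ M, v ≠ u, not adjacent to u
    have hsub : ¬ (M.toFinset ⊆ G.neighborFinset u ∪ {u}) := by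
      intro hs
      have := Finset.card_le_card hs
      have h2 := Finset.card_union_le (G.neighborFinset u) {u}
      have h3 : (G.neighborFinset u).card ≤ Δ := by
        rw [SimpleGraph.card_neighborFinset_eq_degree]
        exact G.degree_le_maxDegree u
      simp only [Finset.card_singleton] at h2
      omega
    obtain ⟨v, hvM, hv⟩ := Finset.not_subset.mp hsub
    simp only [Finset.mem_union, Finset.mem_singleton, SimpleGraph.mem_neighborFinset,
      not_or] at hv
    obtain ⟨hnadj, hne⟩ := hv
    rw [Set.mem_toFinset] at hvM
    obtain ⟨p, hp⟩ := hM.1 u hu v hvM (Ne.symm hne)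
    obtain ⟨w, hadj, hwsup⟩ := first_step p (Ne.symm hne)
    refine ⟨w, ?_, hadj⟩
    intro hwM
    rcases hp w hwsup hwM with rfl | rfl
    · exact G.irrefl hadj
    · exact hnadj hadj
  -- Mᶜ is not empty
  have hc0 : (Mᶜ : Set V).toFinset.card ≠ 0 := by
    intro h0
    have hMne : ∃ u, u ∈ M := by
      have : M.toFinset.Nonempty := Finset.card_pos.mp (by omega)
      obtain ⟨u, hu⟩ := this
      exact ⟨u, Set.mem_toFinset.mp hu⟩
    obtain ⟨u, hu⟩ := hMne
    obtain ⟨x, hx, -⟩ := lemA u hu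
    have : x ∈ (Mᶜ : Set V).toFinset := by simpa using hx
    rw [Finset.card_eq_zero.mp h0] at this
    exact absurd this (Finset.notMem_empty x)
  -- Mᶜ is not a singleton
  have hc1 : (Mᶜ : Set V).toFinset.card ≠ 1 := by
    intro h1
    obtain ⟨x, hx⟩ := Finset.card_eq_one.mp h1
    have hxc : ∀ y, y ∉ M → y = x := by
      intro y hy
      have : y ∈ (Mᶜ : Set V).toFinset := by simpa using hy
      rw [hx] at this; simpa using this
    have hsub : M.toFinset ⊆ G.neighborFinset x := by
      intro u hu
      rw [Set.mem_toFinset] at hu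
      obtain ⟨z, hz, hadj⟩ := lemA u hu
      rw [SimpleGraph.mem_neighborFinset]
      have := hxc z hz
      subst this
      exact hadj.symm
    have := Finset.card_le_card hsub
    rw [SimpleGraph.card_neighborFinset_eq_degree] at this
    have := G.degree_le_maxDegree x
    omega
  have hc2 : 2 ≤ (Mᶜ : Set V).toFinset.card := by omega
  -- every x ∉ M has a neighbor outside M distinct from itself
  have lemB : ∀ x ∉ M, ∃ y, y ∉ M ∧ y ≠ x ∧ G.Adj x y := by
    intro x hx
    obtain ⟨y0, hy0, hy0x⟩ : ∃ y0 ∈ (Mᶜ : Set V).toFinset, y0 ≠ x := by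
      obtain ⟨a, ha, b, hb, hab⟩ := Finset.one_lt_card.mp hc2
      by_cases hax : a = x
      · exact ⟨b, hb, by rw [← hax]; exact fun h => hab h.symm⟩
      · exact ⟨a, ha, hax⟩
    rw [Set.mem_toFinset] at hy0
    obtain ⟨p⟩ := hM.2 ⟨x, hx⟩ ⟨y0, hy0⟩
    have hne : (⟨x, hx⟩ : (Mᶜ : Set V)) ≠ ⟨y0, hy0⟩ := by
      intro h; exact hy0x (congrArg Subtype.val h).symm
    obtain ⟨w, hadj, -⟩ := first_step p hne
    have hadj' : G.Adj x ↑w := by simpa using hadj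
    refine ⟨w.1, w.2, ?_, hadj'⟩
    intro h
    rw [h] at hadj'
    exact G.irrefl hadj'
  -- double counting: |M| ≤ (Δ - 1) * |Mᶜ|
  have hcount : M.toFinset.card * 1 ≤ (Mᶜ : Set V).toFinset.card * (Δ - 1) := by
    refine Finset.card_mul_le_card_mul (fun a b => G.Adj a b) ?_ ?_
    · intro a ha
      rw [Set.mem_toFinset] at ha
      obtain ⟨x, hx, hadj⟩ := lemA a ha
      exact Finset.card_pos.mpr ⟨x, by simp [Finset.mem_bipartiteAbove, hx, hadj]⟩
    · intro b hb
      rw [Set.mem_toFinset] at hb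
      obtain ⟨y, hy, hyb, hadj⟩ := lemB b hb
      have hsub : M.toFinset.bipartiteBelow (fun a b => G.Adj a b) b ⊆
          G.neighborFinset b \ {y} := by
        intro a ha
        simp only [Finset.mem_bipartiteBelow, Set.mem_toFinset] at ha
        simp only [Finset.mem_sdiff, SimpleGraph.mem_neighborFinset, Finset.mem_singleton]
        exact ⟨ha.2.symm, fun h => hy (h ▸ ha.1)⟩
      have h1 := Finset.card_le_card hsub
      have h2 : (G.neighborFinset b \ {y}).card = G.degree b - 1 := by
        rw [Finset.card_sdiff_of_subset (by simp [SimpleGraph.mem_neighborFinset, hadj])]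
        simp [SimpleGraph.card_neighborFinset_eq_degree]
      have h3 := G.degree_le_maxDegree b
      omega
  rw [mul_one] at hcount
  -- convert to reals
  refine le_trans ?_ (le_max_left _ _)
  have hsum : M.toFinset.card + (Mᶜ : Set V).toFinset.card = Fintype.card V := by
    rw [Set.toFinset_compl]
    exact Finset.card_add_card_compl _
  have hac : (M.toFinset.card : ℝ) + ((Mᶜ : Set V).toFinset.card : ℝ)
      = (Fintype.card V : ℝ) := by exact_mod_cast hsum
  have hd1 : (1 : ℝ) ≤ (Δ : ℝ) := by exact_mod_cast hΔ1
  have hcnt : (M.toFinset.card : ℝ) ≤ ((Mᶜ : Set V).toFinset.card : ℝ) * ((Δ : ℝ) - 1) := by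
    have : ((Δ - 1 : ℕ) : ℝ) = (Δ : ℝ) - 1 := by
      rw [Nat.cast_sub hΔ1]; norm_num
    rw [← this]
    exact_mod_cast hcount
  rw [hcard]
  rw [div_mul_eq_mul_div, le_div_iff₀ (by linarith)]
  nlinarith [hcnt, hac]
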